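/- Let g₁, g₂ : 2^T → [0,1] be monotone non-decreasing submodular functions. Then the disjunction h(S) = 1 − (1 − g₁(S))(1 − g₂(S)) is monotone non-decreasing and submodular. -/
import Mathlib


theorem disjunction_monotone_submodular {T : Type*} [DecidableEq T] [Fintype T]
    (g₁ g₂ : Finset T → ℝ)
    (hrange₁ : ∀ S : Finset T, g₁ S ∈ Set.Icc (0:ℝ) 1)
    (hrange₂ : ∀ S : Finset T, g₂ S ∈ Set.Icc (0:ℝ) 1)
    (hmono₁ : ∀ S S' : Finset T, S ⊆ S' → g₁ S ≤ g₁ S')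
    (hmono₂ : ∀ S S' : Finset T, S ⊆ S' → g₂ S ≤ g₂ S')
    (hsub₁ : ∀ (S S' : Finset T) (t : T), S ⊆ S' → t ∉ S' →
      g₁ (insert t S') - g₁ S' ≤ g₁ (insert t S) - g₁ S)
    (hsub₂ : ∀ (S S' : Finset T) (t : T), S ⊆ S' → t ∉ S' →
      g₂ (insert t S') - g₂ S' ≤ g₂ (insert t S) - g₂ S) :
    (∀ S S' : Finset T, S ⊆ S' →
      1 - (1 - g₁ S) * (1 - g₂ S) ≤ 1 - (1 - g₁ S') * (1 - g₂ S')) ∧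
    (∀ (S S' : Finset T) (t : T), S ⊆ S' → t ∉ S' →
      (1 - (1 - g₁ (insert t S')) * (1 - g₂ (insert t S')))
        - (1 - (1 - g₁ S') * (1 - g₂ S')) ≤
      (1 - (1 - g₁ (insert t S)) * (1 - g₂ (insert t S)))
        - (1 - (1 - g₁ S) * (1 - g₂ S))) := by
  constructor
  · intro S S' hss
    have h1 := hrange₁ S'; have h2 := hrange₂ S'
    have m1 := hmono₁ S S' hss; have m2 := hmono₂ S S' hss
    simp only [Set.mem_Icc] at h1 h2
    nlinarith [mul_nonneg (sub_nonneg.2 h1.2) (sub_nonneg.2 h2.2)]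
  · intro S S' t hss hts
    have hts' : t ∉ S := fun h => hts (hss h)
    have m1 : g₁ (insert t S') ≤ g₁ (insert t S') := le_refl _
    have a1 : g₁ S ≤ g₁ (insert t S) := hmono₁ _ _ (Finset.subset_insert _ _)
    have a2 : g₂ S ≤ g₂ (insert t S) := hmono₂ _ _ (Finset.subset_insert _ _)
    have b1 : g₁ S' ≤ g₁ (insert t S') := hmono₁ _ _ (Finset.subset_insert _ _)
    have b2 : g₂ S' ≤ g₂ (insert t S') := hmono₂ _ _ (Finset.subset_insert _ _)
    have c1 : g₁ (insert t S) ≤ g₁ (insert t S') :=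
      hmono₁ _ _ (Finset.insert_subset_insert _ hss)
    have c2 : g₂ (insert t S) ≤ g₂ (insert t S') :=
      hmono₂ _ _ (Finset.insert_subset_insert _ hss)
    have d1 := hsub₁ S S' t hss hts
    have d2 := hsub₂ S S' t hss hts
    have r1 := hrange₁ S; have r2 := hrange₂ S
    have r3 := hrange₁ S'; have r4 := hrange₂ S'
    have r5 := hrange₁ (insert t S); have r6 := hrange₂ (insert t S)
    have r7 := hrange₁ (insert t S'); have r8 := hrange₂ (insert t S')
    simp only [Set.mem_Icc] at r1 r2 r3 r4 r5 r6 r7 r8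
    nlinarith [mul_le_mul d1 (sub_le_sub_left c2 1) (by linarith) (by linarith : (0:ℝ) ≤ g₁ (insert t S) - g₁ S),
      mul_le_mul d2 (sub_le_sub_left c1 1) (by linarith) (by linarith : (0:ℝ) ≤ g₂ (insert t S) - g₂ S),
      mul_le_mul_of_nonneg_right (sub_le_sub_left b2 1) (by linarith : (0:ℝ) ≤ g₁ (insert t S') - g₁ S')]
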